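/- Let α, γ, ξ, η ∈ ℝ with η > 0. Define A(x,t) = (32η²γξ − 32γξ³ + 4αη² − 12αξ² + 2ξ)t + x and u(x,t) = 2η · sech(2η·A(x,t)) · exp(2i·((8η⁴γ − 48η²γξ² + 8ξ⁴γ − 12αη²ξ + 4αξ³ + η² − ξ²)t − ξx)). Then u satisfies the ENLS equation at every (x,t) ∈ ℝ². -/

import Mathlib

open Complex

/-- The extended nonlinear Schrödinger (ENLS) equation
`i u_t + (1/2) u_xx + |u|² u - iα(u_xxx + 6 u_x |u|²)
 + γ(u_xxxx + 6 u_x² ū + 4 u |u_x|² + 8 u_xx |u|² + 2 ū_xx u² + 6 u |u|⁴) = 0`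
for `u : ℝ × ℝ → ℂ`, written as `u x t`. -/
def IsENLSSolution (α γ : ℝ) (u : ℝ → ℝ → ℂ) : Prop :=
  ∀ x t : ℝ,
    Complex.I * deriv (fun s => u x s) t
    + (1 / 2 : ℂ) * iteratedDeriv 2 (fun s => u s t) x
    + (‖u x t‖ : ℂ) ^ 2 * u x t
    - Complex.I * (α : ℂ) * (iteratedDeriv 3 (fun s => u s t) x
        + 6 * deriv (fun s => u s t) x * (‖u x t‖ : ℂ) ^ 2)
    + (γ : ℂ) * (iteratedDeriv 4 (fun s => u s t) x
        + 6 * (deriv (fun s => u s t) x) ^ 2 * (starRingEnd ℂ) (u x t)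
        + 4 * u x t * (‖deriv (fun s => u s t) x‖ : ℂ) ^ 2
        + 8 * iteratedDeriv 2 (fun s => u s t) x * (‖u x t‖ : ℂ) ^ 2
        + 2 * (starRingEnd ℂ) (iteratedDeriv 2 (fun s => u s t) x) * (u x t) ^ 2
        + 6 * u x t * (‖u x t‖ : ℂ) ^ 4) = 0

lemma cosh_ne (y : ℝ) : Real.cosh y ≠ 0 := (Real.cosh_pos y).ne'

lemma sech_hasDerivAt {f : ℝ → ℝ} {f' : ℝ} {s : ℝ} (hf : HasDerivAt f f' s) :
    HasDerivAt (fun y => (Real.cosh (f y))⁻¹)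
      (-(f' * Real.tanh (f s) * (Real.cosh (f s))⁻¹)) s := by
  have h := (hf.cosh).inv (cosh_ne _)
  refine h.congr_deriv ?_
  rw [Real.tanh_eq_sinh_div_cosh]
  field_simp

lemma tanh_hasDerivAt {f : ℝ → ℝ} {f' : ℝ} {s : ℝ} (hf : HasDerivAt f f' s) :
    HasDerivAt (fun y => Real.tanh (f y)) (f' * ((Real.cosh (f s))⁻¹) ^ 2) s := by
  have h := (hf.sinh).div (hf.cosh) (cosh_ne _)
  have hfun : (fun y => Real.sinh (f y) / Real.cosh (f y)) = fun y => Real.tanh (f y) := by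
    funext y; rw [Real.tanh_eq_sinh_div_cosh]
  rw [← hfun]
  refine h.congr_deriv ?_
  have h1 := Real.cosh_sq_sub_sinh_sq (f s)
  field_simp
  linear_combination f' * h1

lemma phase_hasDerivAt {f : ℝ → ℝ} {f' : ℝ} {s : ℝ} (hf : HasDerivAt f f' s) :
    HasDerivAt (fun y => Complex.exp (2 * Complex.I * ((f y : ℝ) : ℂ)))
      (2 * Complex.I * (f' : ℂ) * Complex.exp (2 * Complex.I * ((f s : ℝ) : ℂ))) s := by
  have h := ((hf.ofReal_comp).const_mul (2 * Complex.I)).cexp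
  convert h using 1
  ring

lemma absq (z : ℂ) : ((‖z‖ : ℝ) : ℂ) ^ 2 = z * (starRingEnd ℂ) z := by
  rw [Complex.mul_conj]
  norm_cast
  exact Complex.sq_norm z

lemma absq4 (z : ℂ) : ((‖z‖ : ℝ) : ℂ) ^ 4 = (z * (starRingEnd ℂ) z) ^ 2 := by
  rw [← absq]; ring

/-- The single soliton `u = 2η sech(2ηA) e^{2i((8η⁴γ-48η²γξ²+8ξ⁴γ-12αη²ξ+4αξ³+η²-ξ²)t-ξx)}`
with `A = (32η²γξ-32γξ³+4αη²-12αξ²+2ξ)t + x` solves the ENLS equation. -/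
theorem single_soliton_solves_ENLS
    (α γ ξ η : ℝ) (hη : 0 < η)
    (A : ℝ → ℝ → ℝ)
    (hA : ∀ x t, A x t = (32 * η ^ 2 * γ * ξ - 32 * γ * ξ ^ 3 + 4 * α * η ^ 2
        - 12 * α * ξ ^ 2 + 2 * ξ) * t + x)
    (u : ℝ → ℝ → ℂ)
    (hu : ∀ x t, u x t = ((2 * η * (Real.cosh (2 * η * A x t))⁻¹ : ℝ) : ℂ)
        * Complex.exp (2 * Complex.I *
          (((8 * η ^ 4 * γ - 48 * η ^ 2 * γ * ξ ^ 2 + 8 * ξ ^ 4 * γ - 12 * α * η ^ 2 * ξ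
            + 4 * α * ξ ^ 3 + η ^ 2 - ξ ^ 2) * t - ξ * x : ℝ) : ℂ))) :
    IsENLSSolution α γ u := by
  intro x t
  set b : ℝ := 32 * η ^ 2 * γ * ξ - 32 * γ * ξ ^ 3 + 4 * α * η ^ 2 - 12 * α * ξ ^ 2 + 2 * ξ
    with hb
  set w : ℝ := 8 * η ^ 4 * γ - 48 * η ^ 2 * γ * ξ ^ 2 + 8 * ξ ^ 4 * γ - 12 * α * η ^ 2 * ξ
    + 4 * α * ξ ^ 3 + η ^ 2 - ξ ^ 2 with hw
  -- basic functions of the x-variable (t fixed)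
  set Sx : ℝ → ℝ := fun s => (Real.cosh (2 * η * (b * t + s)))⁻¹ with hSx
  set Tx : ℝ → ℝ := fun s => Real.tanh (2 * η * (b * t + s)) with hTx
  set Ex : ℝ → ℂ := fun s => Complex.exp (2 * Complex.I * ((w * t - ξ * s : ℝ) : ℂ)) with hEx
  set L : ℝ → ℂ := fun s => -2 * (η : ℂ) * ((Tx s : ℝ) : ℂ) - 2 * Complex.I * (ξ : ℂ) with hL
  set u0 : ℝ → ℂ := fun s => 2 * (η : ℂ) * ((Sx s : ℝ) : ℂ) * Ex s with hu0
  set u1 : ℝ → ℂ := fun s => u0 s * L s with hu1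
  set u2 : ℝ → ℂ := fun s => u0 s * (L s * L s
    - 4 * (η : ℂ) ^ 2 * (((Sx s : ℝ) : ℂ) * ((Sx s : ℝ) : ℂ))) with hu2
  set u3 : ℝ → ℂ := fun s => u0 s * (L s * L s * L s
    - 12 * (η : ℂ) ^ 2 * (((Sx s : ℝ) : ℂ) * ((Sx s : ℝ) : ℂ) * L s)
    + 16 * (η : ℂ) ^ 3 * (((Sx s : ℝ) : ℂ) * ((Sx s : ℝ) : ℂ) * ((Tx s : ℝ) : ℂ))) with hu3
  set u4 : ℝ → ℂ := fun s => u0 s * (L s ^ 4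
    - 24 * (η : ℂ) ^ 2 * ((Sx s : ℝ) : ℂ) ^ 2 * L s ^ 2
    + 64 * (η : ℂ) ^ 3 * ((Sx s : ℝ) : ℂ) ^ 2 * ((Tx s : ℝ) : ℂ) * L s
    + 80 * (η : ℂ) ^ 4 * ((Sx s : ℝ) : ℂ) ^ 4
    - 64 * (η : ℂ) ^ 4 * ((Sx s : ℝ) : ℂ) ^ 2 * ((Tx s : ℝ) : ℂ) ^ 2) with hu4
  -- inner derivatives
  have hinx1 : ∀ s : ℝ, HasDerivAt (fun y : ℝ => 2 * η * (b * t + y)) (2 * η) s := by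
    intro s
    simpa using ((hasDerivAt_id s).const_add (b * t)).const_mul (2 * η)
  have hinx2 : ∀ s : ℝ, HasDerivAt (fun y : ℝ => w * t - ξ * y) (-ξ) s := by
    intro s
    simpa using ((hasDerivAt_id s).const_mul ξ).const_sub (w * t)
  have hSd : ∀ s, HasDerivAt Sx (-(2 * η * Real.tanh (2 * η * (b * t + s)) * Sx s)) s := by
    intro s
    exact sech_hasDerivAt (hinx1 s)
  have hTd : ∀ s, HasDerivAt Tx (2 * η * Sx s ^ 2) s := by
    intro s
    exact tanh_hasDerivAt (hinx1 s)
  have hScc : ∀ s, HasDerivAt (fun y => ((Sx y : ℝ) : ℂ))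
      (((-(2 * η * Real.tanh (2 * η * (b * t + s)) * Sx s) : ℝ)) : ℂ) s :=
    fun s => (hSd s).ofReal_comp
  have hTcc : ∀ s, HasDerivAt (fun y => ((Tx y : ℝ) : ℂ)) (((2 * η * Sx s ^ 2 : ℝ)) : ℂ) s :=
    fun s => (hTd s).ofReal_comp
  have hEd : ∀ s, HasDerivAt Ex (2 * Complex.I * ((-ξ : ℝ) : ℂ) * Ex s) s := by
    intro s
    exact phase_hasDerivAt (hinx2 s)
  have hLd : ∀ s, HasDerivAt L (-4 * (η : ℂ) ^ 2 * ((Sx s : ℝ) : ℂ) ^ 2) s := by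
    intro s
    have h := ((hTcc s).const_mul (-2 * (η : ℂ))).sub_const (2 * Complex.I * (ξ : ℂ))
    refine h.congr_deriv ?_
    push_cast
    ring
  have h0 : ∀ s, HasDerivAt u0 (u1 s) s := by
    intro s
    have h := ((hScc s).const_mul (2 * (η : ℂ))).mul (hEd s)
    refine h.congr_deriv ?_
    simp only [hu1, hu0, hL, hTx]
    push_cast
    ring
  have h1 : ∀ s, HasDerivAt u1 (u2 s) s := by
    intro s
    have h := (h0 s).mul (hLd s)
    refine h.congr_deriv ?_
    simp only [hu2, hu1, hu0, hL]
    push_cast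
    ring
  have h2 : ∀ s, HasDerivAt u2 (u3 s) s := by
    intro s
    have h := (h0 s).mul (((hLd s).mul (hLd s)).sub
      (((hScc s).mul (hScc s)).const_mul (4 * (η : ℂ) ^ 2)))
    refine h.congr_deriv ?_
    simp only [hu3, hu2, hu1, hu0, hL, hTx, Pi.mul_apply, Pi.sub_apply, Pi.add_apply, Pi.pow_apply]
    push_cast
    ring
  have h3 : ∀ s, HasDerivAt u3 (u4 s) s := by
    intro s
    have h := (h0 s).mul (((((hLd s).mul (hLd s)).mul (hLd s)).sub
        ((((hScc s).mul (hScc s)).mul (hLd s)).const_mul (12 * (η : ℂ) ^ 2))).add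
        ((((hScc s).mul (hScc s)).mul (hTcc s)).const_mul (16 * (η : ℂ) ^ 3)))
    refine h.congr_deriv ?_
    simp only [hu4, hu3, hu2, hu1, hu0, hL, hTx, Pi.mul_apply, Pi.sub_apply, Pi.add_apply, Pi.pow_apply]
    push_cast
    ring
  have hueq : ∀ s, u s t = u0 s := by
    intro s
    rw [hu, hA]
    simp only [hu0, hSx, hEx]
    push_cast
    ring
  have hfunx : (fun s => u s t) = u0 := funext hueq
  have d1 : deriv u0 = u1 := funext fun s => (h0 s).deriv
  have d2 : deriv u1 = u2 := funext fun s => (h1 s).deriv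
  have d3 : deriv u2 = u3 := funext fun s => (h2 s).deriv
  have d4 : deriv u3 = u4 := funext fun s => (h3 s).deriv
  have i2 : iteratedDeriv 2 u0 = u2 := by
    rw [iteratedDeriv_succ, iteratedDeriv_one, d1, d2]
  have i3 : iteratedDeriv 3 u0 = u3 := by
    rw [iteratedDeriv_succ, iteratedDeriv_succ, iteratedDeriv_one, d1, d2, d3]
  have i4 : iteratedDeriv 4 u0 = u4 := by
    rw [iteratedDeriv_succ, iteratedDeriv_succ, iteratedDeriv_succ, iteratedDeriv_one,
      d1, d2, d3, d4]
  -- time derivative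
  have hdt : HasDerivAt (fun s => u x s)
      (u0 x * (-2 * (η : ℂ) * (b : ℂ) * ((Tx x : ℝ) : ℂ) + 2 * Complex.I * (w : ℂ))) t := by
    have hfunt : (fun s => u x s) = (fun s => ((2 * η * (Real.cosh (2 * η * (b * s + x)))⁻¹ : ℝ) : ℂ)
        * Complex.exp (2 * Complex.I * ((w * s - ξ * x : ℝ) : ℂ))) := by
      funext s; rw [hu, hA]
    rw [hfunt]
    have hin1 : HasDerivAt (fun s : ℝ => 2 * η * (b * s + x)) (2 * η * b) t := by
      simpa using (((hasDerivAt_id t).const_mul b).add_const x).const_mul (2 * η)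
    have hin2 : HasDerivAt (fun s : ℝ => w * s - ξ * x) w t := by
      simpa using ((hasDerivAt_id t).const_mul w).sub_const (ξ * x)
    have h := (((sech_hasDerivAt hin1).const_mul (2 * η)).ofReal_comp).mul
      (phase_hasDerivAt hin2)
    refine h.congr_deriv ?_
    simp only [hu0, hSx, hTx, hEx]
    push_cast
    ring
  have hdtval : deriv (fun s => u x s) t
      = u0 x * (-2 * (η : ℂ) * (b : ℂ) * ((Tx x : ℝ) : ℂ) + 2 * Complex.I * (w : ℂ)) := hdt.deriv
  -- final assembly
  rw [hueq x, hfunx, hdtval, d1, i2, i3, i4]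
  rw [absq (u0 x), absq (u1 x), absq4 (u0 x)]
  have hcu0 : (starRingEnd ℂ) (u0 x)
      = 2 * (η : ℂ) * ((Sx x : ℝ) : ℂ) * (starRingEnd ℂ) (Ex x) := by
    simp only [hu0, map_mul, Complex.conj_ofReal, map_ofNat]
  have hcu1 : (starRingEnd ℂ) (u1 x)
      = 2 * (η : ℂ) * ((Sx x : ℝ) : ℂ) * (starRingEnd ℂ) (Ex x)
        * (-2 * (η : ℂ) * ((Tx x : ℝ) : ℂ) + 2 * Complex.I * (ξ : ℂ)) := by
    simp only [hu1, hu0, hL, map_mul, map_pow, map_sub, map_add, map_neg, Complex.conj_ofReal,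
      Complex.conj_I, map_ofNat]
    ring
  have hcu2 : (starRingEnd ℂ) (u2 x)
      = 2 * (η : ℂ) * ((Sx x : ℝ) : ℂ) * (starRingEnd ℂ) (Ex x)
        * ((-2 * (η : ℂ) * ((Tx x : ℝ) : ℂ) + 2 * Complex.I * (ξ : ℂ))
            * (-2 * (η : ℂ) * ((Tx x : ℝ) : ℂ) + 2 * Complex.I * (ξ : ℂ))
          - 4 * (η : ℂ) ^ 2 * (((Sx x : ℝ) : ℂ) * ((Sx x : ℝ) : ℂ))) := by
    simp only [hu2, hu1, hu0, hL, map_mul, map_pow, map_sub, map_add, map_neg, Complex.conj_ofReal,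
      Complex.conj_I, map_ofNat]
    ring
  rw [hcu0, hcu1, hcu2]
  have hr1 : Ex x * (starRingEnd ℂ) (Ex x) = 1 := by
    simp only [hEx]
    rw [← Complex.exp_conj]
    have hc : (starRingEnd ℂ) (2 * Complex.I * ((w * t - ξ * x : ℝ) : ℂ))
        = -(2 * Complex.I * ((w * t - ξ * x : ℝ) : ℂ)) := by
      simp only [map_mul, Complex.conj_ofReal, Complex.conj_I, map_ofNat]
      ring
    rw [hc, ← Complex.exp_add, add_neg_cancel, Complex.exp_zero]
  have hr2 : ((Tx x : ℝ) : ℂ) ^ 2 + ((Sx x : ℝ) : ℂ) ^ 2 = 1 := by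
    have h : Tx x ^ 2 + Sx x ^ 2 = 1 := by
      simp only [hTx, hSx]
      rw [Real.tanh_eq_sinh_div_cosh]
      have h1 := Real.cosh_sq_sub_sinh_sq (2 * η * (b * t + x))
      have h2 := cosh_ne (2 * η * (b * t + x))
      field_simp
      linear_combination -h1
    exact_mod_cast h
  simp only [hu4, hu3, hu2, hu1, hu0, hL]
  rw [hb, hw]
  push_cast
  linear_combination
    ((8:ℂ) * (η:ℂ)^3 * ((Sx x : ℝ) : ℂ) * (Ex x)
      + (-8:ℂ) * (η:ℂ)^3 * ((Tx x : ℝ) : ℂ)^2 * ((Sx x : ℝ) : ℂ) * (Ex x)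
      + (-128:ℂ) * (γ:ℂ) * (η:ℂ)^5 * ((Sx x : ℝ) : ℂ) * (Ex x)
      + (192:ℂ) * (γ:ℂ) * (η:ℂ)^5 * ((Sx x : ℝ) : ℂ) * (Ex x)^2 * ((starRingEnd ℂ) (Ex x))
      + (896:ℂ) * (γ:ℂ) * (η:ℂ)^5 * ((Tx x : ℝ) : ℂ)^2 * ((Sx x : ℝ) : ℂ) * (Ex x)
      + (-384:ℂ) * (γ:ℂ) * (η:ℂ)^5 * ((Tx x : ℝ) : ℂ)^2 * ((Sx x : ℝ) : ℂ) * (Ex x)^2 * ((starRingEnd ℂ) (Ex x))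
      + (-768:ℂ) * (γ:ℂ) * (η:ℂ)^5 * ((Tx x : ℝ) : ℂ)^4 * ((Sx x : ℝ) : ℂ) * (Ex x)
      + (192:ℂ) * (γ:ℂ) * (η:ℂ)^5 * ((Tx x : ℝ) : ℂ)^4 * ((Sx x : ℝ) : ℂ) * (Ex x)^2 * ((starRingEnd ℂ) (Ex x))
      + (768:ℂ) * (γ:ℂ) * (ξ:ℂ) * (η:ℂ)^4 * ((Tx x : ℝ) : ℂ) * ((Sx x : ℝ) : ℂ) * (Ex x) * Complex.I
      + (-768:ℂ) * (γ:ℂ) * (ξ:ℂ) * (η:ℂ)^4 * ((Tx x : ℝ) : ℂ)^3 * ((Sx x : ℝ) : ℂ) * (Ex x) * Complex.I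
      + (-384:ℂ) * (γ:ℂ) * (ξ:ℂ)^2 * (η:ℂ)^3 * ((Sx x : ℝ) : ℂ) * (Ex x)
      + (384:ℂ) * (γ:ℂ) * (ξ:ℂ)^2 * (η:ℂ)^3 * ((Tx x : ℝ) : ℂ)^2 * ((Sx x : ℝ) : ℂ) * (Ex x)
      + (96:ℂ) * (α:ℂ) * (η:ℂ)^4 * ((Tx x : ℝ) : ℂ) * ((Sx x : ℝ) : ℂ) * (Ex x) * Complex.I
      + (-96:ℂ) * (α:ℂ) * (η:ℂ)^4 * ((Tx x : ℝ) : ℂ)^3 * ((Sx x : ℝ) : ℂ) * (Ex x) * Complex.I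
      + (-96:ℂ) * (α:ℂ) * (ξ:ℂ) * (η:ℂ)^3 * ((Sx x : ℝ) : ℂ) * (Ex x)
      + (96:ℂ) * (α:ℂ) * (ξ:ℂ) * (η:ℂ)^3 * ((Tx x : ℝ) : ℂ)^2 * ((Sx x : ℝ) : ℂ) * (Ex x)) * hr1
    + ((-4:ℂ) * (η:ℂ)^3 * ((Sx x : ℝ) : ℂ) * (Ex x)
      + (8:ℂ) * (η:ℂ)^3 * ((Sx x : ℝ) : ℂ) * (Ex x)^2 * ((starRingEnd ℂ) (Ex x))
      + (160:ℂ) * (γ:ℂ) * (η:ℂ)^5 * ((Sx x : ℝ) : ℂ) * (Ex x)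
      + (-320:ℂ) * (γ:ℂ) * (η:ℂ)^5 * ((Sx x : ℝ) : ℂ) * (Ex x)^2 * ((starRingEnd ℂ) (Ex x))
      + (192:ℂ) * (γ:ℂ) * (η:ℂ)^5 * ((Sx x : ℝ) : ℂ) * (Ex x)^3 * ((starRingEnd ℂ) (Ex x))^2
      + (160:ℂ) * (γ:ℂ) * (η:ℂ)^5 * ((Sx x : ℝ) : ℂ)^3 * (Ex x)
      + (-320:ℂ) * (γ:ℂ) * (η:ℂ)^5 * ((Sx x : ℝ) : ℂ)^3 * (Ex x)^2 * ((starRingEnd ℂ) (Ex x))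
      + (192:ℂ) * (γ:ℂ) * (η:ℂ)^5 * ((Sx x : ℝ) : ℂ)^3 * (Ex x)^3 * ((starRingEnd ℂ) (Ex x))^2
      + (-736:ℂ) * (γ:ℂ) * (η:ℂ)^5 * ((Tx x : ℝ) : ℂ)^2 * ((Sx x : ℝ) : ℂ) * (Ex x)
      + (960:ℂ) * (γ:ℂ) * (η:ℂ)^5 * ((Tx x : ℝ) : ℂ)^2 * ((Sx x : ℝ) : ℂ) * (Ex x)^2 * ((starRingEnd ℂ) (Ex x))
      + (-192:ℂ) * (γ:ℂ) * (η:ℂ)^5 * ((Tx x : ℝ) : ℂ)^2 * ((Sx x : ℝ) : ℂ) * (Ex x)^3 * ((starRingEnd ℂ) (Ex x))^2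
      + (-640:ℂ) * (γ:ℂ) * (ξ:ℂ) * (η:ℂ)^4 * ((Tx x : ℝ) : ℂ) * ((Sx x : ℝ) : ℂ) * (Ex x) * Complex.I
      + (768:ℂ) * (γ:ℂ) * (ξ:ℂ) * (η:ℂ)^4 * ((Tx x : ℝ) : ℂ) * ((Sx x : ℝ) : ℂ) * (Ex x)^2 * ((starRingEnd ℂ) (Ex x)) * Complex.I
      + (192:ℂ) * (γ:ℂ) * (ξ:ℂ)^2 * (η:ℂ)^3 * ((Sx x : ℝ) : ℂ) * (Ex x)
      + (-384:ℂ) * (γ:ℂ) * (ξ:ℂ)^2 * (η:ℂ)^3 * ((Sx x : ℝ) : ℂ) * (Ex x)^2 * ((starRingEnd ℂ) (Ex x))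
      + (-80:ℂ) * (α:ℂ) * (η:ℂ)^4 * ((Tx x : ℝ) : ℂ) * ((Sx x : ℝ) : ℂ) * (Ex x) * Complex.I
      + (96:ℂ) * (α:ℂ) * (η:ℂ)^4 * ((Tx x : ℝ) : ℂ) * ((Sx x : ℝ) : ℂ) * (Ex x)^2 * ((starRingEnd ℂ) (Ex x)) * Complex.I
      + (48:ℂ) * (α:ℂ) * (ξ:ℂ) * (η:ℂ)^3 * ((Sx x : ℝ) : ℂ) * (Ex x)
      + (-96:ℂ) * (α:ℂ) * (ξ:ℂ) * (η:ℂ)^3 * ((Sx x : ℝ) : ℂ) * (Ex x)^2 * ((starRingEnd ℂ) (Ex x))) * hr2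
    + ((4:ℂ) * (η:ℂ)^3 * ((Sx x : ℝ) : ℂ) * (Ex x)
      + (32:ℂ) * (γ:ℂ) * (η:ℂ)^5 * ((Sx x : ℝ) : ℂ) * (Ex x)
      + (-192:ℂ) * (γ:ℂ) * (ξ:ℂ)^2 * (η:ℂ)^3 * ((Sx x : ℝ) : ℂ) * (Ex x)
      + (-192:ℂ) * (γ:ℂ) * (ξ:ℂ)^2 * (η:ℂ)^3 * ((Sx x : ℝ) : ℂ)^3 * (Ex x)
      + (384:ℂ) * (γ:ℂ) * (ξ:ℂ)^2 * (η:ℂ)^3 * ((Sx x : ℝ) : ℂ)^3 * (Ex x)^2 * ((starRingEnd ℂ) (Ex x))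
      + (192:ℂ) * (γ:ℂ) * (ξ:ℂ)^2 * (η:ℂ)^3 * ((Tx x : ℝ) : ℂ)^2 * ((Sx x : ℝ) : ℂ) * (Ex x)
      + (128:ℂ) * (γ:ℂ) * (ξ:ℂ)^3 * (η:ℂ)^2 * ((Tx x : ℝ) : ℂ) * ((Sx x : ℝ) : ℂ) * (Ex x) * Complex.I
      + (32:ℂ) * (γ:ℂ) * (ξ:ℂ)^4 * (η:ℂ) * ((Sx x : ℝ) : ℂ) * (Ex x) * Complex.I^2
      + (-48:ℂ) * (α:ℂ) * (ξ:ℂ) * (η:ℂ)^3 * ((Sx x : ℝ) : ℂ) * (Ex x)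
      + (-48:ℂ) * (α:ℂ) * (ξ:ℂ) * (η:ℂ)^3 * ((Sx x : ℝ) : ℂ)^3 * (Ex x)
      + (96:ℂ) * (α:ℂ) * (ξ:ℂ) * (η:ℂ)^3 * ((Sx x : ℝ) : ℂ)^3 * (Ex x)^2 * ((starRingEnd ℂ) (Ex x))
      + (48:ℂ) * (α:ℂ) * (ξ:ℂ) * (η:ℂ)^3 * ((Tx x : ℝ) : ℂ)^2 * ((Sx x : ℝ) : ℂ) * (Ex x)
      + (48:ℂ) * (α:ℂ) * (ξ:ℂ)^2 * (η:ℂ)^2 * ((Tx x : ℝ) : ℂ) * ((Sx x : ℝ) : ℂ) * (Ex x) * Complex.I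
      + (16:ℂ) * (α:ℂ) * (ξ:ℂ)^3 * (η:ℂ) * ((Sx x : ℝ) : ℂ) * (Ex x) * Complex.I^2) * Complex.I_sq
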